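/- For every matroid M of rank r on the ground set {1,…,n}, the element K(M) of F lies in the image of the polynomial ring ℚ[u_1,…,u_r,t_1,…,t_n] in F; that is, the a priori rational function K(M) is a polynomial in u_1,…,u_r and t_1,…,t_n. -/

import Mathlib

open scoped Classical

/-- The field of rational functions `F = Frac(ℚ[u_1,…,u_r,t_1,…,t_n])`. -/
abbrev F (r n : ℕ) : Type := FractionRing (MvPolynomial (Fin r ⊕ Fin n) ℚ)

/-- The variable `u_i` viewed in `F`. -/
noncomputable def U (r n : ℕ) (i : Fin r) : F r n :=
  algebraMap (MvPolynomial (Fin r ⊕ Fin n) ℚ) (F r n) (MvPolynomial.X (Sum.inl i))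

/-- The variable `t_j` viewed in `F`. -/
noncomputable def T (r n : ℕ) (j : Fin n) : F r n :=
  algebraMap (MvPolynomial (Fin r ⊕ Fin n) ℚ) (F r n) (MvPolynomial.X (Sum.inr j))

/-- `B(w) = {w_i : w_i ∉ cl_M({w_1,…,w_{i-1}})}`, the lexicographically first basis of `M`
in the list `(w_1,…,w_n)`. -/
def firstBasis {n : ℕ} (M : Matroid (Fin n)) (w : Equiv.Perm (Fin n)) : Set (Fin n) :=
  {x | x ∉ M.closure (⇑w '' {i | i < w.symm x})}

/-- The rational function
`K(M) = Σ_{w ∈ S_n} [∏_{j ∉ B(w)} ∏_{i=1}^{r} (1 − u_i t_j)] · ∏_{i=1}^{n−1} (1 − t_{w_{i+1}}/t_{w_i})^{−1}`. -/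
noncomputable def Kclass (r n : ℕ) (M : Matroid (Fin n)) : F r n :=
  ∑ w : Equiv.Perm (Fin n),
    (∏ j : Fin n, if j ∈ firstBasis M w then 1
      else ∏ i : Fin r, (1 - U r n i * T r n j)) *
    ∏ i : Fin n, (if h : (i : ℕ) + 1 < n
      then (1 - T r n (w ⟨(i : ℕ) + 1, h⟩) / T r n (w i))⁻¹ else 1)

namespace KP

/-! ### Basic algebra in the polynomial ring -/

abbrev RR (r n : ℕ) : Type := MvPolynomial (Fin r ⊕ Fin n) ℚ

noncomputable def tv (r : ℕ) {n : ℕ} (j : Fin n) : RR r n := MvPolynomial.X (Sum.inr j)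

lemma tv_sub_ne_zero (r : ℕ) {n : ℕ} {a b : Fin n} (h : a ≠ b) : tv r a - tv r b ≠ 0 := by
  rw [sub_ne_zero]
  exact fun hc => h (Sum.inr_injective (MvPolynomial.X_injective hc))

/-- The substitution `t_b ↦ t_a`. -/
noncomputable def sb (r : ℕ) {n : ℕ} (a b : Fin n) : RR r n →+* RR r n :=
  (MvPolynomial.aeval (fun v : Fin r ⊕ Fin n =>
    if v = Sum.inr b then MvPolynomial.X (Sum.inr a) else MvPolynomial.X v)).toRingHom

lemma sb_X (r : ℕ) {n : ℕ} (a b : Fin n) (v : Fin r ⊕ Fin n) :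
    sb r a b (MvPolynomial.X v) =
      if v = Sum.inr b then MvPolynomial.X (Sum.inr a) else MvPolynomial.X v :=
  MvPolynomial.aeval_X _ v

lemma sb_tv (r : ℕ) {n : ℕ} (a b j : Fin n) : sb r a b (tv r j) = tv r (if j = b then a else j) := by
  rw [tv, sb_X]
  split_ifs with h1 h2 h2
  · rfl
  · exact absurd (Sum.inr_injective h1) h2
  · exact absurd (congrArg Sum.inr h2) h1
  · rfl

lemma sb_dvd_sub_self (r : ℕ) {n : ℕ} (a b : Fin n) (p : RR r n) :
    (tv r a - tv r b) ∣ p - sb r a b p := by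
  induction p using MvPolynomial.induction_on with
  | C q => simp [sb, MvPolynomial.aeval_C]
  | add p q hp hq =>
      have h : p + q - sb r a b (p + q) = (p - sb r a b p) + (q - sb r a b q) := by
        rw [map_add]; ring
      rw [h]; exact dvd_add hp hq
  | mul_X p v hp =>
      have hX : (tv r a - tv r b) ∣ (MvPolynomial.X v - sb r a b (MvPolynomial.X v)) := by
        rw [sb_X]
        split_ifs with h
        · subst h
          refine ⟨-1, by simp only [tv]; ring⟩
        · simp
      have h : p * MvPolynomial.X v - sb r a b (p * MvPolynomial.X v) =
          (p - sb r a b p) * MvPolynomial.X v +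
            sb r a b p * (MvPolynomial.X v - sb r a b (MvPolynomial.X v)) := by
        rw [map_mul]; ring
      rw [h]
      exact dvd_add (hp.mul_right _) (hX.mul_left _)

lemma dvd_of_sb_eq_zero (r : ℕ) {n : ℕ} {a b : Fin n} {p : RR r n} (h : sb r a b p = 0) :
    (tv r a - tv r b) ∣ p := by
  have := sb_dvd_sub_self r a b p
  rwa [h, sub_zero] at this

lemma prime_tv_sub (r : ℕ) {n : ℕ} {a b : Fin n} (h : a ≠ b) : Prime (tv r a - tv r b) := by
  rw [← Ideal.span_singleton_prime (tv_sub_ne_zero r h)]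
  have hker : Ideal.span {tv r a - tv r b} = RingHom.ker (sb r a b) := by
    apply le_antisymm
    · rw [Ideal.span_le, Set.singleton_subset_iff]
      have : sb r a b (tv r a - tv r b) = 0 := by
        rw [map_sub, sb_tv, sb_tv, if_neg h, if_pos rfl, sub_self]
      exact this
    · intro p hp
      rw [RingHom.mem_ker] at hp
      exact Ideal.mem_span_singleton.2 (dvd_of_sb_eq_zero r hp)
  rw [hker]
  exact RingHom.ker_isPrime _

lemma not_dvd_tv_sub (r : ℕ) {n : ℕ} {a b c d : Fin n} (hab : a < b) (hcd : c < d)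
    (hne : (a, b) ≠ (c, d)) : ¬ (tv r a - tv r b ∣ tv r c - tv r d) := by
  intro hdvd
  have h0 : sb r a b (tv r a - tv r b) = 0 := by
    rw [map_sub, sb_tv, sb_tv, if_neg hab.ne, if_pos rfl, sub_self]
  have h1 : sb r a b (tv r c - tv r d) = 0 := by
    obtain ⟨e, he⟩ := hdvd
    rw [he, map_mul, h0, zero_mul]
  rw [map_sub, sb_tv, sb_tv] at h1
  have key : (if c = b then a else c) ≠ (if d = b then a else d) := by
    split_ifs with g1 g2 g2
    · exact absurd (g1.trans g2.symm) hcd.ne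
    · intro h
      rw [g1, ← h] at hcd
      exact absurd hcd (lt_asymm hab)
    · intro h
      exact hne (by rw [← h, ← g2])
    · exact hcd.ne
  exact tv_sub_ne_zero r key h1

lemma prod_primes_dvd' {α : Type*} [CommMonoidWithZero α] [IsCancelMulZero α] {ι : Type*}
    (s : Finset ι) (f : ι → α)
    (hp : ∀ i ∈ s, Prime (f i))
    (hnd : ∀ i ∈ s, ∀ j ∈ s, i ≠ j → ¬ f i ∣ f j) :
    ∀ q : α, (∀ i ∈ s, f i ∣ q) → (∏ i ∈ s, f i) ∣ q := by
  induction s using Finset.induction_on with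
  | empty => simp
  | @insert a s ha ih =>
      intro q hdvd
      obtain ⟨m, hm⟩ := hdvd a (Finset.mem_insert_self a s)
      have hrest : ∀ i ∈ s, f i ∣ m := by
        intro i hi
        have hiq : f i ∣ f a * m := hm ▸ hdvd i (Finset.mem_insert_of_mem hi)
        rcases (hp i (Finset.mem_insert_of_mem hi)).2.2 _ _ hiq with h | h
        · exact absurd h (hnd i (Finset.mem_insert_of_mem hi) a (Finset.mem_insert_self a s)
            (fun he => ha (he ▸ hi)))
        · exact h
      have := ih (fun i hi => hp i (Finset.mem_insert_of_mem hi))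
        (fun i hi j hj hij =>
          hnd i (Finset.mem_insert_of_mem hi) j (Finset.mem_insert_of_mem hj) hij)
        m hrest
      rw [Finset.prod_insert ha, hm]
      exact mul_dvd_mul_left _ this

/-! ### Consecutive positions -/

def sfin (n : ℕ) : Finset (Fin n) := Finset.univ.filter (fun i => (i : ℕ) + 1 < n)

def nxt {n : ℕ} (i : Fin n) : Fin n := if h : (i : ℕ) + 1 < n then ⟨(i : ℕ) + 1, h⟩ else i

lemma mem_sfin {n : ℕ} {i : Fin n} : i ∈ sfin n ↔ (i : ℕ) + 1 < n := by simp [sfin]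

lemma nxt_val {n : ℕ} {i : Fin n} (h : i ∈ sfin n) : ((nxt i : Fin n) : ℕ) = (i : ℕ) + 1 := by
  rw [mem_sfin] at h; rw [nxt, dif_pos h]

lemma nxt_ne {n : ℕ} {i : Fin n} (h : i ∈ sfin n) : nxt i ≠ i := by
  intro hc; have := nxt_val h; rw [hc] at this; omega

lemma w_nxt_ne {n : ℕ} {w : Equiv.Perm (Fin n)} {i : Fin n} (h : i ∈ sfin n) :
    w i ≠ w (nxt i) := fun hc => (nxt_ne h) (w.injective hc).symm

lemma pair_inj {n : ℕ} {w : Equiv.Perm (Fin n)} {i j : Fin n} (hi : i ∈ sfin n) (hj : j ∈ sfin n)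
    (h : (w i = w j ∧ w (nxt i) = w (nxt j)) ∨ (w i = w (nxt j) ∧ w (nxt i) = w j)) : i = j := by
  rcases h with ⟨h1, _⟩ | ⟨h1, h2⟩
  · exact w.injective h1
  · have e1 : i = nxt j := w.injective h1
    have e2 : nxt i = j := w.injective h2
    have v1 := nxt_val hi
    have v2 := nxt_val hj
    have q1 : (i : ℕ) = (j : ℕ) + 1 := by rw [e1, v2]
    have q2 : (j : ℕ) = (i : ℕ) + 1 := by rw [← e2, v1]
    omega

/-! ### The numerators and denominators -/

noncomputable def den (r : ℕ) {n : ℕ} (w : Equiv.Perm (Fin n)) : RR r n :=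
  ∏ i ∈ sfin n, (tv r (w i) - tv r (w (nxt i)))

noncomputable def tprod (r : ℕ) {n : ℕ} (w : Equiv.Perm (Fin n)) : RR r n :=
  ∏ i ∈ sfin n, tv r (w i)

def pairs (n : ℕ) : Finset (Fin n × Fin n) := Finset.univ.filter (fun p => p.1 < p.2)

lemma mem_pairs {n : ℕ} {p : Fin n × Fin n} : p ∈ pairs n ↔ p.1 < p.2 := by simp [pairs]

def adjp {n : ℕ} (w : Equiv.Perm (Fin n)) (a b : Fin n) : Prop :=
  ∃ i ∈ sfin n, (w i = a ∧ w (nxt i) = b) ∨ (w i = b ∧ w (nxt i) = a)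

noncomputable def cpoly (r : ℕ) {n : ℕ} (w : Equiv.Perm (Fin n)) : RR r n :=
  ∏ p ∈ (pairs n).filter (fun p => ¬ adjp w p.1 p.2), (tv r p.1 - tv r p.2)

noncomputable def den' (r : ℕ) {n : ℕ} (w : Equiv.Perm (Fin n)) : RR r n :=
  ∏ p ∈ (pairs n).filter (fun p => adjp w p.1 p.2), (tv r p.1 - tv r p.2)

noncomputable def eps (r : ℕ) {n : ℕ} (w : Equiv.Perm (Fin n)) : RR r n :=
  ∏ i ∈ sfin n, (if w i < w (nxt i) then (1 : RR r n) else -1)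

noncomputable def rho (r : ℕ) {n : ℕ} (w : Equiv.Perm (Fin n)) : RR r n :=
  eps r w * cpoly r w

noncomputable def V (r n : ℕ) : RR r n := ∏ p ∈ pairs n, (tv r p.1 - tv r p.2)

/-- Sorted consecutive pair. -/
def sp {n : ℕ} (w : Equiv.Perm (Fin n)) (i : Fin n) : Fin n × Fin n :=
  if w i < w (nxt i) then (w i, w (nxt i)) else (w (nxt i), w i)

lemma sp_mem {n : ℕ} {w : Equiv.Perm (Fin n)} {i : Fin n} (hi : i ∈ sfin n) :
    sp w i ∈ (pairs n).filter (fun p => adjp w p.1 p.2) := by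
  rw [Finset.mem_filter, mem_pairs, sp]
  split_ifs with h
  · exact ⟨h, ⟨i, hi, Or.inl ⟨rfl, rfl⟩⟩⟩
  · exact ⟨lt_of_le_of_ne (not_lt.1 h) (w_nxt_ne hi).symm, ⟨i, hi, Or.inr ⟨rfl, rfl⟩⟩⟩

lemma sp_inj {n : ℕ} {w : Equiv.Perm (Fin n)} {i j : Fin n} (hi : i ∈ sfin n) (hj : j ∈ sfin n)
    (h : sp w i = sp w j) : i = j := by
  rw [sp, sp] at h
  split_ifs at h with h1 h2 h2 <;> rw [Prod.mk.injEq] at h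
  · exact pair_inj hi hj (Or.inl h)
  · exact pair_inj hi hj (Or.inr h)
  · exact pair_inj hi hj (Or.inr ⟨h.2, h.1⟩)
  · exact pair_inj hi hj (Or.inl ⟨h.2, h.1⟩)

lemma den_eq_eps_den' (r : ℕ) {n : ℕ} (w : Equiv.Perm (Fin n)) :
    den r w = eps r w * den' r w := by
  have step1 : den r w = eps r w * ∏ i ∈ sfin n, (tv r (sp w i).1 - tv r (sp w i).2) := by
    rw [den, eps, ← Finset.prod_mul_distrib]
    apply Finset.prod_congr rfl
    intro i _
    rw [sp]
    split_ifs with h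
    · rw [one_mul]
    · ring
  rw [step1]
  congr 1
  refine Finset.prod_bij (fun i _ => sp w i) (fun i hi => sp_mem hi)
    (fun i hi j hj h => sp_inj hi hj h) ?_ (fun i hi => rfl)
  rintro ⟨a, b⟩ hp
  rw [Finset.mem_filter, mem_pairs] at hp
  obtain ⟨hab, i, hi, hcase⟩ := hp
  refine ⟨i, hi, ?_⟩
  show sp w i = (a, b)
  rcases hcase with ⟨e1, e2⟩ | ⟨e1, e2⟩
  · rw [sp, e1, e2, if_pos hab]
  · rw [sp, e1, e2, if_neg (not_lt.2 hab.le)]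

lemma eps_sq (r : ℕ) {n : ℕ} (w : Equiv.Perm (Fin n)) : eps r w * eps r w = 1 := by
  rw [eps, ← Finset.prod_mul_distrib, Finset.prod_eq_one]
  intro i _
  split_ifs <;> ring

lemma den'_mul_cpoly (r : ℕ) {n : ℕ} (w : Equiv.Perm (Fin n)) :
    den' r w * cpoly r w = V r n := by
  rw [den', cpoly, V, Finset.prod_filter_mul_prod_filter_not]

lemma den_mul_rho (r : ℕ) {n : ℕ} (w : Equiv.Perm (Fin n)) : den r w * rho r w = V r n := by
  rw [den_eq_eps_den', rho]
  calc eps r w * den' r w * (eps r w * cpoly r w)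
      = (eps r w * eps r w) * (den' r w * cpoly r w) := by ring
    _ = V r n := by rw [eps_sq, den'_mul_cpoly, one_mul]

lemma den_ne_zero (r : ℕ) {n : ℕ} (w : Equiv.Perm (Fin n)) : den r w ≠ 0 := by
  rw [den]
  exact Finset.prod_ne_zero_iff.2 (fun i hi => tv_sub_ne_zero r (w_nxt_ne hi))

lemma V_ne_zero (r n : ℕ) : V r n ≠ 0 := by
  rw [V]
  exact Finset.prod_ne_zero_iff.2 (fun p hp => tv_sub_ne_zero r (mem_pairs.1 hp).ne)

end KP

namespace KP

/-! ### Behaviour of `firstBasis` under adjacent swaps -/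

variable {n : ℕ} {M : Matroid (Fin n)}

lemma mem_firstBasis_iff {w : Equiv.Perm (Fin n)} {x : Fin n} :
    x ∈ firstBasis M w ↔ x ∉ M.closure (⇑w '' {i | i < w.symm x}) := Iff.rfl

lemma mul_swap_symm_apply {c d : Fin n} (w : Equiv.Perm (Fin n)) (x : Fin n) :
    (Equiv.swap c d * w).symm x = w.symm (Equiv.swap c d x) := by
  simp [Equiv.Perm.mul_def, Equiv.symm_swap]

lemma swap_image_eq {c d : Fin n} {S : Set (Fin n)} (hc : c ∈ S) (hd : d ∈ S) :
    ⇑(Equiv.swap c d) '' S = S := by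
  ext x
  rw [Set.mem_image_equiv, Equiv.symm_swap]
  by_cases h1 : x = c
  · subst h1; rw [Equiv.swap_apply_left]; exact ⟨fun _ => hc, fun _ => hd⟩
  by_cases h2 : x = d
  · subst h2; rw [Equiv.swap_apply_right]; exact ⟨fun _ => hd, fun _ => hc⟩
  · rw [Equiv.swap_apply_of_ne_of_ne h1 h2]

variable {w : Equiv.Perm (Fin n)} {k : Fin n}

lemma lt_nxt_iff (hk : k ∈ sfin n) (i : Fin n) : i < nxt k ↔ i = k ∨ i < k := by
  have h1 := nxt_val hk
  rw [Fin.lt_def, Fin.lt_def, h1, Fin.ext_iff]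
  omega

lemma image_prefix_nxt (hk : k ∈ sfin n) (u : Equiv.Perm (Fin n)) :
    ⇑u '' {i | i < nxt k} = insert (u k) (⇑u '' {i | i < k}) := by
  have hs : {i : Fin n | i < nxt k} = insert k {i | i < k} := by
    ext i
    rw [Set.mem_setOf_eq, lt_nxt_iff hk]
    rfl
  rw [hs, Set.image_insert_eq]

lemma image_prefix_le (hk : k ∈ sfin n) {m : Fin n} (hm : (m : ℕ) ≤ (k : ℕ)) :
    ⇑(Equiv.swap (w k) (w (nxt k)) * w) '' {i | i < m} = ⇑w '' {i | i < m} := by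
  apply Set.image_congr
  intro i hi
  rw [Set.mem_setOf_eq, Fin.lt_def] at hi
  rw [Equiv.Perm.mul_apply]
  apply Equiv.swap_apply_of_ne_of_ne
  · intro hc
    have h := congrArg Fin.val (w.injective hc)
    omega
  · intro hc
    have h := congrArg Fin.val (w.injective hc)
    rw [nxt_val hk] at h
    omega

lemma image_prefix_ge (hk : k ∈ sfin n) {m : Fin n} (hm : (k : ℕ) + 2 ≤ (m : ℕ)) :
    ⇑(Equiv.swap (w k) (w (nxt k)) * w) '' {i | i < m} = ⇑w '' {i | i < m} := by
  have hco : ⇑(Equiv.swap (w k) (w (nxt k)) * w) = ⇑(Equiv.swap (w k) (w (nxt k))) ∘ ⇑w := rfl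
  rw [hco, Set.image_comp]
  apply swap_image_eq
  · exact ⟨k, by rw [Set.mem_setOf_eq, Fin.lt_def]; omega, rfl⟩
  · exact ⟨nxt k, by rw [Set.mem_setOf_eq, Fin.lt_def, nxt_val hk]; omega, rfl⟩

lemma firstBasis_swap_other (hk : k ∈ sfin n) {x : Fin n}
    (hxc : x ≠ w k) (hxd : x ≠ w (nxt k)) :
    (x ∈ firstBasis M (Equiv.swap (w k) (w (nxt k)) * w) ↔ x ∈ firstBasis M w) := by
  have hsx : Equiv.swap (w k) (w (nxt k)) x = x := Equiv.swap_apply_of_ne_of_ne hxc hxd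
  rw [mem_firstBasis_iff, mem_firstBasis_iff, mul_swap_symm_apply, hsx]
  have hmk : w.symm x ≠ k := fun h => hxc (((Equiv.symm_apply_eq w).mp h))
  have hmn : w.symm x ≠ nxt k := fun h => hxd (((Equiv.symm_apply_eq w).mp h))
  have hval : (w.symm x : ℕ) ≤ (k : ℕ) ∨ (k : ℕ) + 2 ≤ (w.symm x : ℕ) := by
    have h1 : (w.symm x : ℕ) ≠ (k : ℕ) := fun hh => hmk (Fin.ext hh)
    have h2 : (w.symm x : ℕ) ≠ (k : ℕ) + 1 :=
      fun hh => hmn (Fin.ext (by rw [nxt_val hk]; exact hh))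
    omega
  rcases hval with h | h
  · rw [image_prefix_le hk h]
  · rw [image_prefix_ge hk h]

lemma mem_fB_c : w k ∈ firstBasis M w ↔ w k ∉ M.closure (⇑w '' {i | i < k}) := by
  rw [mem_firstBasis_iff, Equiv.symm_apply_apply]

lemma mem_fB_d (hk : k ∈ sfin n) : w (nxt k) ∈ firstBasis M w ↔
    w (nxt k) ∉ M.closure (insert (w k) (⇑w '' {i | i < k})) := by
  rw [mem_firstBasis_iff, Equiv.symm_apply_apply, image_prefix_nxt hk]

lemma mem_fB'_d (hk : k ∈ sfin n) :
    w (nxt k) ∈ firstBasis M (Equiv.swap (w k) (w (nxt k)) * w) ↔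
      w (nxt k) ∉ M.closure (⇑w '' {i | i < k}) := by
  rw [mem_firstBasis_iff, mul_swap_symm_apply, Equiv.swap_apply_right, Equiv.symm_apply_apply,
    image_prefix_le hk (le_refl _)]

lemma mem_fB'_c (hk : k ∈ sfin n) :
    w k ∈ firstBasis M (Equiv.swap (w k) (w (nxt k)) * w) ↔
      w k ∉ M.closure (insert (w (nxt k)) (⇑w '' {i | i < k})) := by
  rw [mem_firstBasis_iff, mul_swap_symm_apply, Equiv.swap_apply_left, Equiv.symm_apply_apply,
    image_prefix_nxt hk (Equiv.swap (w k) (w (nxt k)) * w), image_prefix_le hk (le_refl _),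
    Equiv.Perm.mul_apply, Equiv.swap_apply_left]

theorem firstBasis_swap (hk : k ∈ sfin n) :
    firstBasis M (Equiv.swap (w k) (w (nxt k)) * w) = firstBasis M w ∨
    ∀ j : Fin n, (Equiv.swap (w k) (w (nxt k)) j ∈
        firstBasis M (Equiv.swap (w k) (w (nxt k)) * w) ↔ j ∈ firstBasis M w) := by
  by_cases h1 : w k ∈ M.closure (⇑w '' {i | i < k})
  · left
    ext x
    by_cases hxc : x = w k
    · subst hxc
      rw [mem_fB'_c hk, mem_fB_c]
      have h1' : w k ∈ M.closure (insert (w (nxt k)) (⇑w '' {i | i < k})) :=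
        M.closure_subset_closure (Set.subset_insert _ _) h1
      exact iff_of_false (not_not_intro h1') (not_not_intro h1)
    by_cases hxd : x = w (nxt k)
    · subst hxd
      rw [mem_fB'_d hk, mem_fB_d hk, Matroid.closure_insert_eq_of_mem_closure h1]
    · exact firstBasis_swap_other hk hxc hxd
  · by_cases h2 : w (nxt k) ∈ M.closure (⇑w '' {i | i < k})
    · left
      ext x
      by_cases hxc : x = w k
      · subst hxc
        rw [mem_fB'_c hk, mem_fB_c, Matroid.closure_insert_eq_of_mem_closure h2]
      by_cases hxd : x = w (nxt k)
      · subst hxd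
        rw [mem_fB'_d hk, mem_fB_d hk]
        have h2' : w (nxt k) ∈ M.closure (insert (w k) (⇑w '' {i | i < k})) :=
          M.closure_subset_closure (Set.subset_insert _ _) h2
        exact iff_of_false (not_not_intro h2) (not_not_intro h2')
      · exact firstBasis_swap_other hk hxc hxd
    · right
      intro j
      by_cases hjc : j = w k
      · subst hjc
        rw [Equiv.swap_apply_left, mem_fB'_d hk, mem_fB_c]
        exact iff_of_true h2 h1
      by_cases hjd : j = w (nxt k)
      · subst hjd
        rw [Equiv.swap_apply_right, mem_fB'_c hk, mem_fB_d hk]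
        constructor
        · intro hcnd hdin
          exact hcnd (Matroid.closure_exchange ⟨hdin, h2⟩).1
        · intro hdnc hcin
          exact hdnc (Matroid.closure_exchange ⟨hcin, h1⟩).1
      · rw [Equiv.swap_apply_of_ne_of_ne hjc hjd]
        exact firstBasis_swap_other hk hjc hjd

end KP

namespace KP

/-! ### Substitution identities -/

variable {r n : ℕ} {M : Matroid (Fin n)} {w : Equiv.Perm (Fin n)} {a b k : Fin n}

lemma swap_idx (hab : a ≠ b) (x : Fin n) :
    (if Equiv.swap a b x = b then a else Equiv.swap a b x) = (if x = b then a else x) := by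
  by_cases h1 : x = a
  · subst h1; rw [Equiv.swap_apply_left, if_pos rfl, if_neg hab]
  by_cases h2 : x = b
  · subst h2; rw [Equiv.swap_apply_right, if_neg hab, if_pos rfl]
  · rw [Equiv.swap_apply_of_ne_of_ne h1 h2]

lemma sb_tv_swap (r : ℕ) (hab : a ≠ b) (x : Fin n) :
    sb r a b (tv r (Equiv.swap a b x)) = sb r a b (tv r x) := by
  rw [sb_tv, sb_tv, swap_idx hab]

noncomputable def uprod (r : ℕ) {n : ℕ} (j : Fin n) : RR r n :=
  ∏ i : Fin r, (1 - MvPolynomial.X (Sum.inl i) * tv r j)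

lemma sb_uprod (r : ℕ) (a b j : Fin n) :
    sb r a b (uprod r j) = uprod r (if j = b then a else j) := by
  rw [uprod, map_prod, uprod]
  apply Finset.prod_congr rfl
  intro i _
  rw [map_sub, map_one, map_mul, sb_X, if_neg (by simp), sb_tv]

lemma sb_uprod_swap (r : ℕ) (hab : a ≠ b) (x : Fin n) :
    sb r a b (uprod r (Equiv.swap a b x)) = sb r a b (uprod r x) := by
  rw [sb_uprod, sb_uprod, swap_idx hab]

noncomputable def NB (r : ℕ) {n : ℕ} (M : Matroid (Fin n)) (w : Equiv.Perm (Fin n)) : RR r n :=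
  ∏ j : Fin n, if j ∈ firstBasis M w then 1 else uprod r j

noncomputable def num (r : ℕ) {n : ℕ} (M : Matroid (Fin n)) (w : Equiv.Perm (Fin n)) : RR r n :=
  NB r M w * tprod r w

lemma sb_NB_swap (r : ℕ) (hab : a ≠ b) (hk : k ∈ sfin n)
    (hor : (w k = a ∧ w (nxt k) = b) ∨ (w k = b ∧ w (nxt k) = a)) :
    sb r a b (NB r M (Equiv.swap a b * w)) = sb r a b (NB r M w) := by
  have hswap : Equiv.swap a b = Equiv.swap (w k) (w (nxt k)) := by
    rcases hor with ⟨h1, h2⟩ | ⟨h1, h2⟩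
    · rw [h1, h2]
    · rw [h1, h2, Equiv.swap_comm]
  rcases firstBasis_swap (M := M) hk with hcase | hcase
  · rw [NB, NB, hswap, hcase]
  · rw [NB, NB, hswap, map_prod, map_prod]
    conv_lhs => rw [← Equiv.prod_comp (Equiv.swap (w k) (w (nxt k)))
      (fun j => sb r a b
        (if j ∈ firstBasis M (Equiv.swap (w k) (w (nxt k)) * w) then 1 else uprod r j))]
    apply Finset.prod_congr rfl
    intro j _
    rw [apply_ite (sb r a b), apply_ite (sb r a b), map_one]
    refine if_congr (hcase j) rfl ?_
    rw [← hswap]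
    exact sb_uprod_swap r hab j

lemma sb_tprod_swap (r : ℕ) (hab : a ≠ b) (w : Equiv.Perm (Fin n)) :
    sb r a b (tprod r (Equiv.swap a b * w)) = sb r a b (tprod r w) := by
  rw [tprod, tprod, map_prod, map_prod]
  apply Finset.prod_congr rfl
  intro i _
  rw [Equiv.Perm.mul_apply]
  exact sb_tv_swap r hab _

lemma sb_num_swap (r : ℕ) (hab : a ≠ b) (hk : k ∈ sfin n)
    (hor : (w k = a ∧ w (nxt k) = b) ∨ (w k = b ∧ w (nxt k) = a)) :
    sb r a b (num r M (Equiv.swap a b * w)) = sb r a b (num r M w) := by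
  rw [num, num, map_mul, map_mul, sb_NB_swap r hab hk hor, sb_tprod_swap r hab w]

/-! ### Claim B : antisymmetry of `rho` under the substitution -/

noncomputable def den0 (r : ℕ) {n : ℕ} (w : Equiv.Perm (Fin n)) (k : Fin n) : RR r n :=
  ∏ i ∈ (sfin n).erase k, (tv r (w i) - tv r (w (nxt i)))

lemma den_eq_den0 (r : ℕ) (hk : k ∈ sfin n) (w : Equiv.Perm (Fin n)) :
    den r w = (tv r (w k) - tv r (w (nxt k))) * den0 r w k :=
  (Finset.mul_prod_erase _ _ hk).symm

lemma sb_den0_swap (r : ℕ) (hab : a ≠ b) :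
    sb r a b (den0 r (Equiv.swap a b * w) k) = sb r a b (den0 r w k) := by
  rw [den0, den0, map_prod, map_prod]
  apply Finset.prod_congr rfl
  intro i _
  rw [map_sub, map_sub, Equiv.Perm.mul_apply, Equiv.Perm.mul_apply,
    sb_tv_swap r hab, sb_tv_swap r hab]

lemma sb_den0_ne_zero (r : ℕ) (hk : k ∈ sfin n) (h1 : w k = a) (h2 : w (nxt k) = b) :
    sb r a b (den0 r w k) ≠ 0 := by
  rw [den0, map_prod]
  apply Finset.prod_ne_zero_iff.2
  intro i hi
  obtain ⟨hik, his⟩ := Finset.mem_erase.1 hi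
  rw [map_sub, sb_tv, sb_tv]
  apply tv_sub_ne_zero
  have hxy : w i ≠ w (nxt i) := w_nxt_ne his
  split_ifs with g1 g2 g2
  · exact absurd (g1.trans g2.symm) hxy
  · intro h
    exact hik (pair_inj his hk (Or.inr ⟨g1.trans h2.symm, h.symm.trans h1.symm⟩))
  · intro h
    exact hik (pair_inj his hk (Or.inl ⟨h.trans h1.symm, g2.trans h2.symm⟩))
  · exact hxy

noncomputable def V0 (r : ℕ) {n : ℕ} (a b : Fin n) : RR r n :=
  ∏ p ∈ (pairs n).erase (a, b), (tv r p.1 - tv r p.2)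

set_option maxHeartbeats 1000000 in
lemma V_eq_V0 (r : ℕ) (hab : a < b) : V r n = (tv r a - tv r b) * V0 r a b := by
  have hm : ((a, b) : Fin n × Fin n) ∈ pairs n := mem_pairs.2 hab
  rw [V, V0]
  exact (Finset.mul_prod_erase (pairs n) (fun p => tv r p.1 - tv r p.2) hm).symm

lemma sb_rho_add_aux (r : ℕ) (hab : a < b) (hk : k ∈ sfin n)
    (h1 : w k = a) (h2 : w (nxt k) = b) :
    sb r a b (rho r (Equiv.swap a b * w)) + sb r a b (rho r w) = 0 := by
  have hne := tv_sub_ne_zero r (n := n) hab.ne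
  have hw : den0 r w k * rho r w = V0 r a b := by
    apply mul_left_cancel₀ hne
    have hd := den_eq_den0 r hk w
    rw [h1, h2] at hd
    rw [← mul_assoc, ← hd, den_mul_rho, V_eq_V0 r hab]
  have e1 : (Equiv.swap a b * w) k = b := by
    rw [Equiv.Perm.mul_apply, h1, Equiv.swap_apply_left]
  have e2 : (Equiv.swap a b * w) (nxt k) = a := by
    rw [Equiv.Perm.mul_apply, h2, Equiv.swap_apply_right]
  have hw' : den0 r (Equiv.swap a b * w) k * rho r (Equiv.swap a b * w) = - V0 r a b := by
    apply mul_left_cancel₀ hne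
    have hd := den_eq_den0 r hk (Equiv.swap a b * w)
    rw [e1, e2] at hd
    have key : (tv r b - tv r a) *
        (den0 r (Equiv.swap a b * w) k * rho r (Equiv.swap a b * w)) = V r n := by
      rw [← mul_assoc, ← hd, den_mul_rho]
    rw [V_eq_V0 r hab] at key
    linear_combination -key
  have t1 := congrArg (sb r a b) hw
  have t2 := congrArg (sb r a b) hw'
  rw [map_mul] at t1 t2
  rw [sb_den0_swap r hab.ne, map_neg] at t2
  have hzero : sb r a b (den0 r w k) *
      (sb r a b (rho r (Equiv.swap a b * w)) + sb r a b (rho r w)) = 0 := by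
    linear_combination t1 + t2
  exact (mul_eq_zero.1 hzero).resolve_left (sb_den0_ne_zero r hk h1 h2)

lemma sb_rho_add (r : ℕ) (hab : a < b) (hk : k ∈ sfin n)
    (hor : (w k = a ∧ w (nxt k) = b) ∨ (w k = b ∧ w (nxt k) = a)) :
    sb r a b (rho r (Equiv.swap a b * w)) + sb r a b (rho r w) = 0 := by
  rcases hor with ⟨h1, h2⟩ | ⟨h1, h2⟩
  · exact sb_rho_add_aux r hab hk h1 h2
  · have e1 : (Equiv.swap a b * w) k = a := by
      rw [Equiv.Perm.mul_apply, h1, Equiv.swap_apply_right]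
    have e2 : (Equiv.swap a b * w) (nxt k) = b := by
      rw [Equiv.Perm.mul_apply, h2, Equiv.swap_apply_left]
    have h := sb_rho_add_aux (w := Equiv.swap a b * w) r hab hk e1 e2
    rw [← mul_assoc, Equiv.swap_mul_self, one_mul] at h
    linear_combination h

lemma sb_rho_zero (r : ℕ) (hab : a < b) (hna : ¬ adjp w a b) : sb r a b (rho r w) = 0 := by
  rw [rho, map_mul]
  apply mul_eq_zero_of_right
  rw [cpoly, map_prod]
  refine Finset.prod_eq_zero (i := ((a, b) : Fin n × Fin n)) ?_ ?_
  · exact Finset.mem_filter.2 ⟨mem_pairs.2 hab, hna⟩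
  · rw [map_sub, sb_tv, sb_tv, if_neg hab.ne, if_pos rfl, sub_self]

end KP

namespace KP

variable {r n : ℕ} {M : Matroid (Fin n)}

noncomputable def Qp (r : ℕ) {n : ℕ} (M : Matroid (Fin n)) : RR r n :=
  ∑ w : Equiv.Perm (Fin n), num r M w * rho r w

lemma sb_Qp (r : ℕ) {a b : Fin n} (hab : a < b) : sb r a b (Qp r M) = 0 := by
  rw [Qp, map_sum]
  have hzero : ∀ w ∈ Finset.univ, ¬ adjp w a b → sb r a b (num r M w * rho r w) = 0 := by
    intro w _ hna
    rw [map_mul, sb_rho_zero r hab hna, mul_zero]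
  rw [← Finset.sum_filter_of_ne
    (p := fun w : Equiv.Perm (Fin n) => adjp w a b)
    (fun w hw hne => by_contra fun hna => hne (hzero w hw hna))]
  refine Finset.sum_involution (fun w _ => Equiv.swap a b * w) ?_ ?_ ?_ ?_
  · intro w hw
    obtain ⟨k, hk, hor⟩ := (Finset.mem_filter.1 hw).2
    rw [map_mul, map_mul, sb_num_swap r hab.ne hk hor]
    linear_combination sb r a b (num r M w) * sb_rho_add r hab hk hor
  · intro w _ _
    intro hcontra
    have h := congrArg (fun u : Equiv.Perm (Fin n) => u (w.symm a)) hcontra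
    simp only [Equiv.Perm.mul_apply, Equiv.apply_symm_apply] at h
    rw [Equiv.swap_apply_left] at h
    exact hab.ne' h
  · intro w hw
    rw [Finset.mem_filter] at hw ⊢
    obtain ⟨hwu, k, hk, hor⟩ := hw
    refine ⟨Finset.mem_univ _, k, hk, ?_⟩
    rcases hor with ⟨h1, h2⟩ | ⟨h1, h2⟩
    · exact Or.inr ⟨by rw [Equiv.Perm.mul_apply, h1, Equiv.swap_apply_left],
        by rw [Equiv.Perm.mul_apply, h2, Equiv.swap_apply_right]⟩
    · exact Or.inl ⟨by rw [Equiv.Perm.mul_apply, h1, Equiv.swap_apply_right],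
        by rw [Equiv.Perm.mul_apply, h2, Equiv.swap_apply_left]⟩
  · intro w _
    show Equiv.swap a b * (Equiv.swap a b * w) = w
    rw [← mul_assoc, Equiv.swap_mul_self, one_mul]

lemma V_dvd_Qp (r : ℕ) (M : Matroid (Fin n)) : V r n ∣ Qp r M := by
  rw [V]
  refine prod_primes_dvd' (pairs n) (fun p => tv r p.1 - tv r p.2)
    (fun p hp => prime_tv_sub r (mem_pairs.1 hp).ne)
    (fun p hp q hq hpq => not_dvd_tv_sub r (mem_pairs.1 hp) (mem_pairs.1 hq) (by simpa using hpq))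
    (Qp r M) (fun p hp => dvd_of_sb_eq_zero r (sb_Qp r (mem_pairs.1 hp)))

/-! ### Rewriting `Kclass` -/

lemma phi_NB (r : ℕ) (M : Matroid (Fin n)) (w : Equiv.Perm (Fin n)) :
    (∏ j : Fin n, if j ∈ firstBasis M w then 1
      else ∏ i : Fin r, (1 - U r n i * T r n j))
      = algebraMap (RR r n) (F r n) (NB r M w) := by
  rw [NB, map_prod]
  apply Finset.prod_congr rfl
  intro j _
  rw [apply_ite (algebraMap (RR r n) (F r n)), map_one]
  by_cases h : j ∈ firstBasis M w
  · rw [if_pos h, if_pos h]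
  rw [if_neg h, if_neg h, uprod, map_prod]
  apply Finset.prod_congr rfl
  intro i _
  rw [map_sub, map_one, map_mul]
  rfl

lemma T_ne_zero (r : ℕ) (x : Fin n) : T r n x ≠ 0 := by
  have hinj := IsFractionRing.injective (RR r n) (F r n)
  exact (map_ne_zero_iff _ hinj).2 (MvPolynomial.X_ne_zero _)

lemma phi_dite (r : ℕ) (w : Equiv.Perm (Fin n)) :
    (∏ i : Fin n, (if h : (i : ℕ) + 1 < n
        then (1 - T r n (w ⟨(i : ℕ) + 1, h⟩) / T r n (w i))⁻¹ else 1))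
      = algebraMap (RR r n) (F r n) (tprod r w) *
        (algebraMap (RR r n) (F r n) (den r w))⁻¹ := by
  have step1 : (∏ i : Fin n, (if h : (i : ℕ) + 1 < n
        then (1 - T r n (w ⟨(i : ℕ) + 1, h⟩) / T r n (w i))⁻¹ else 1))
      = ∏ i : Fin n, (if (i : ℕ) + 1 < n
        then (1 - T r n (w (nxt i)) / T r n (w i))⁻¹ else 1) := by
    apply Finset.prod_congr rfl
    intro i _
    by_cases h : (i : ℕ) + 1 < n
    · rw [dif_pos h, if_pos h, nxt, dif_pos h]
    · rw [dif_neg h, if_neg h]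
  rw [step1, ← Finset.prod_filter
    (fun i : Fin n => (i : ℕ) + 1 < n)
    (fun i => (1 - T r n (w (nxt i)) / T r n (w i))⁻¹)]
  have step2 : ∀ i ∈ sfin n, (1 - T r n (w (nxt i)) / T r n (w i))⁻¹
      = T r n (w i) * (T r n (w i) - T r n (w (nxt i)))⁻¹ := by
    intro i _
    rw [one_sub_div (T_ne_zero r (w i)), inv_div, div_eq_mul_inv]
  rw [show (Finset.univ.filter fun i : Fin n => (i : ℕ) + 1 < n) = sfin n from rfl,
    Finset.prod_congr rfl step2, Finset.prod_mul_distrib, Finset.prod_inv_distrib,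
    tprod, den, map_prod, map_prod]
  congr 1
  apply congrArg
  apply Finset.prod_congr rfl
  intro i _
  rw [map_sub]
  rfl

lemma Kclass_eq (r : ℕ) (M : Matroid (Fin n)) :
    Kclass r n M = ∑ w : Equiv.Perm (Fin n),
      algebraMap (RR r n) (F r n) (num r M w) *
        (algebraMap (RR r n) (F r n) (den r w))⁻¹ := by
  rw [Kclass]
  apply Finset.sum_congr rfl
  intro w _
  rw [phi_NB, phi_dite, num, map_mul]
  ring

end KP

/-- For every matroid `M` of rank `r` on `{1,…,n}`, the a priori rational function `K(M)`
is a polynomial in `u_1,…,u_r` and `t_1,…,t_n`. -/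
theorem Kclass_is_polynomial (r n : ℕ) (hr : 1 ≤ r) (hrn : r ≤ n)
    (M : Matroid (Fin n)) (hE : M.E = Set.univ)
    (hrank : ∀ B : Set (Fin n), M.IsBase B → B.ncard = r) :
    ∃ p : MvPolynomial (Fin r ⊕ Fin n) ℚ,
      algebraMap (MvPolynomial (Fin r ⊕ Fin n) ℚ) (F r n) p = Kclass r n M := by
  obtain ⟨p, hp⟩ := KP.V_dvd_Qp r M
  refine ⟨p, ?_⟩
  have hinj := IsFractionRing.injective (KP.RR r n) (F r n)
  have hVne : algebraMap (KP.RR r n) (F r n) (KP.V r n) ≠ 0 :=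
    (map_ne_zero_iff _ hinj).2 (KP.V_ne_zero r n)
  apply mul_right_cancel₀ hVne
  rw [KP.Kclass_eq r M, Finset.sum_mul]
  have hterm : ∀ w : Equiv.Perm (Fin n),
      algebraMap (KP.RR r n) (F r n) (KP.num r M w) *
        (algebraMap (KP.RR r n) (F r n) (KP.den r w))⁻¹ *
        algebraMap (KP.RR r n) (F r n) (KP.V r n)
      = algebraMap (KP.RR r n) (F r n) (KP.num r M w * KP.rho r w) := by
    intro w
    have hdne : algebraMap (KP.RR r n) (F r n) (KP.den r w) ≠ 0 :=
      (map_ne_zero_iff _ hinj).2 (KP.den_ne_zero r w)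
    have hV : algebraMap (KP.RR r n) (F r n) (KP.V r n)
        = algebraMap (KP.RR r n) (F r n) (KP.den r w) *
          algebraMap (KP.RR r n) (F r n) (KP.rho r w) := by
      rw [← map_mul, KP.den_mul_rho]
    rw [hV, map_mul]
    field_simp
  rw [Finset.sum_congr rfl (fun w _ => hterm w), ← map_sum, ← KP.Qp, hp, map_mul]
  ring
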